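/- Let K, k, z be positive integers with K = k*z + 1 (so K - kz = 1), t = 1, and p = ⌈kz/t⌉ + 1 = K. Then for each user α, the coded symbol T_j^0 = ⊕_{i=0}^{p-1} W_{it+j, i}^{d((i+1)t+j)/k)} with j = kα - (l+1)t contains exactly one part of the sub-file W_{kα - t}^{d(α)} not available to user α, and all other K-1 parts in the XOR have indices accessible to user α; hence user α decodes W_{kα-t}^{d(α)} from the K transmissions, giving total rate 1/K. -/
import Mathlib


theorem stmt_16 (K k z : ℕ) (hK : 0 < K) (hk : 0 < k) (hz : 0 < z)
    (hKe : K = k * z + 1) :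
    (⌈(k * z : ℚ) / (1 : ℚ)⌉ + 1 = (K : ℤ)) ∧
    (∀ α : ZMod K, ∀ l < K,
      ((((l : ZMod K)) + ((k : ZMod K) * α - ((l : ZMod K) + 1))
          = (k : ZMod K) * α - 1) ∧
       (∀ i < K, i ≠ l → ∃ m : ℕ, m < k * z ∧
          (i : ZMod K) + ((k : ZMod K) * α - ((l : ZMod K) + 1))
            = (k : ZMod K) * α + (m : ZMod K)))) ∧
    (K : ℚ) * (1 / ((K : ℚ) * (K : ℚ))) = 1 / (K : ℚ) := by
  refine ⟨?_, ?_, ?_⟩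
  · rw [div_one]
    norm_cast
    rw [Int.ceil_natCast]
    push_cast
    omega
  · intro α l hl
    refine ⟨by ring, ?_⟩
    intro i hi hne
    refine ⟨(i + (K - 1 - l)) % K, ?_, ?_⟩
    · have hlt : (i + (K - 1 - l)) % K < K := Nat.mod_lt _ hK
      -- show it's not K - 1
      have hne' : (i + (K - 1 - l)) % K ≠ K - 1 := by
        intro h
        apply hne
        have hl1 : l ≤ K - 1 := Nat.le_pred_of_lt hl
        rcases le_or_gt i l with hle | hgt
        · -- i + (K-1-l) < K, so mod is itself
          have hs : i + (K - 1 - l) < K := by omega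
          rw [Nat.mod_eq_of_lt hs] at h
          omega
        · have hs : i + (K - 1 - l) = (i - l - 1) + K := by omega
          rw [hs, Nat.add_mod_right, Nat.mod_eq_of_lt (by omega)] at h
          omega
      omega
    · have : ((((i + (K - 1 - l)) % K : ℕ) : ZMod K)) = (i : ZMod K) - (l : ZMod K) - 1 := by
        have : (((i + (K - 1 - l)) % K : ℕ) : ZMod K) = ((i + (K - 1 - l) : ℕ) : ZMod K) := by
          exact ZMod.natCast_mod _ K
        rw [this]
        push_cast
        have h1 : ((K - 1 - l : ℕ) : ZMod K) = (K : ZMod K) - 1 - l := by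
          have : K - 1 - l + (1 + l) = K := by omega
          have := congrArg (Nat.cast : ℕ → ZMod K) this
          push_cast at this
          linear_combination this
        rw [h1, ZMod.natCast_self]
        ring
      rw [this]
      ring
  · have hK0 : (K : ℚ) ≠ 0 := Nat.cast_ne_zero.mpr hK.ne'
    field_simp
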